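/- For every x ∈ ℝ, the sequence aₙ = log ℙ(X̄ₙ ≥ x) is superadditive: a_{m+n} ≥ aₘ + aₙ for all m, n ≥ 1, where values are in [-∞, 0]. -/

import Mathlib

open MeasureTheory ProbabilityTheory Filter Topology

/-- Empirical mean of the first `n` variables. -/
noncomputable def empMean {Ω : Type*} (X : ℕ → Ω → ℝ) (n : ℕ) (ω : Ω) : ℝ :=
  (∑ i ∈ Finset.range n, X i ω) / n

/-- The entropy `s(x) = sup_{n ≥ 1} (1/n) log ℙ(X̄ₙ ≥ x)`, with values in `[-∞, 0]`. -/
noncomputable def entropy {Ω : Type*} [MeasurableSpace Ω] (μ : Measure Ω)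
    (X : ℕ → Ω → ℝ) (x : ℝ) : EReal :=
  ⨆ n : ℕ, ⨆ _ : 1 ≤ n, (((n : ℝ)⁻¹ : ℝ) : EReal) *
    ENNReal.log (μ {ω | x ≤ empMean X n ω})

/-- The pressure `p(λ) = log 𝔼(e^{λ X₁})`, with values in `(-∞, ∞]`. -/
noncomputable def pressure {Ω : Type*} [MeasurableSpace Ω] (μ : Measure Ω)
    (X : ℕ → Ω → ℝ) (l : ℝ) : EReal :=
  ENNReal.log (∫⁻ ω, ENNReal.ofReal (Real.exp (l * X 0 ω)) ∂μ)


lemma aux_identDistrib_add {Ω : Type*} [MeasurableSpace Ω] {μ : Measure Ω} [IsProbabilityMeasure μ]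
    {f g f' g' : Ω → ℝ} (hf : Measurable f) (hg : Measurable g) (hf' : Measurable f')
    (hg' : Measurable g') (h1 : IndepFun f g μ) (h2 : IndepFun f' g' μ)
    (hff' : IdentDistrib f f' μ μ) (hgg' : IdentDistrib g g' μ μ) :
    IdentDistrib (f + g) (f' + g') μ μ := by
  refine ⟨(hf.add hg).aemeasurable, (hf'.add hg').aemeasurable, ?_⟩
  have h1' := (indepFun_iff_map_prod_eq_prod_map_map hf.aemeasurable hg.aemeasurable).1 h1
  have h2' := (indepFun_iff_map_prod_eq_prod_map_map hf'.aemeasurable hg'.aemeasurable).1 h2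
  have e1 : (f + g) = (fun p : ℝ × ℝ => p.1 + p.2) ∘ (fun ω => (f ω, g ω)) := rfl
  have e2 : (f' + g') = (fun p : ℝ × ℝ => p.1 + p.2) ∘ (fun ω => (f' ω, g' ω)) := rfl
  rw [e1, e2, ← Measure.map_map (by fun_prop) (hf.prodMk hg),
    ← Measure.map_map (by fun_prop) (hf'.prodMk hg'), h1', h2',
    hff'.map_eq, hgg'.map_eq]

lemma aux_sum_shift {Ω : Type*} [MeasurableSpace Ω] {μ : Measure Ω} [IsProbabilityMeasure μ]
    (X : ℕ → Ω → ℝ) (hmeas : ∀ i, Measurable (X i))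
    (hindep : iIndepFun X μ)
    (hident : ∀ i, IdentDistrib (X i) (X 0) μ μ) (m : ℕ) : ∀ n : ℕ,
    IdentDistrib (fun ω => ∑ i ∈ Finset.range n, X (m + i) ω)
      (fun ω => ∑ i ∈ Finset.range n, X i ω) μ μ := by
  intro n
  induction n with
  | zero => simpa using IdentDistrib.refl (aemeasurable_const (b := (0:ℝ)))
  | succ n ih =>
    have hSmeas : ∀ (k l : ℕ), Measurable (fun ω => ∑ i ∈ Finset.range l, X (k + i) ω) :=
      fun k l => Finset.measurable_sum _ (fun i _ => hmeas _)
    have h1 : IndepFun (fun ω => ∑ i ∈ Finset.range n, X (m + i) ω) (X (m + n)) μ := by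
      have := hindep.indepFun_finsetSum_of_notMem hmeas
        (s := (Finset.range n).image (fun i => m + i)) (i := m + n)
        (by simp only [Finset.mem_image, Finset.mem_range, not_exists]
            rintro a ha
            omega)
      have e : (∑ j ∈ (Finset.range n).image (fun i => m + i), X j)
          = fun ω => ∑ i ∈ Finset.range n, X (m + i) ω := by
        funext ω
        rw [Finset.sum_apply, Finset.sum_image (fun a _ b _ h => by omega)]
      rwa [e] at this
    have h2 : IndepFun (fun ω => ∑ i ∈ Finset.range n, X i ω) (X n) μ := by
      have := hindep.indepFun_sum_range_succ hmeas n
      have e : (∑ j ∈ Finset.range n, X j) = fun ω => ∑ i ∈ Finset.range n, X i ω := by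
        funext ω; simp [Finset.sum_apply]
      rwa [e] at this
    have hadd := aux_identDistrib_add (hSmeas m n) (hmeas (m + n)) (Finset.measurable_sum _ fun i _ => hmeas i) (hmeas n)
      h1 h2 (by exact ih) ((hident (m + n)).trans (hident n).symm)
    have e1 : (fun ω => ∑ i ∈ Finset.range n, X (m + i) ω) + X (m + n)
        = fun ω => ∑ i ∈ Finset.range (n + 1), X (m + i) ω := by
      funext ω; simp [Finset.sum_range_succ, Pi.add_apply]
    have e2 : (fun ω => ∑ i ∈ Finset.range n, X i ω) + X n
        = fun ω => ∑ i ∈ Finset.range (n + 1), X i ω := by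
      funext ω; simp [Finset.sum_range_succ, Pi.add_apply]
    rw [e1, e2] at hadd; exact hadd

theorem log_prob_superadditive {Ω : Type*} [MeasurableSpace Ω] (μ : Measure Ω) [IsProbabilityMeasure μ]
    (X : ℕ → Ω → ℝ) (hmeas : ∀ i, Measurable (X i))
    (hindep : iIndepFun X μ)
    (hident : ∀ i, IdentDistrib (X i) (X 0) μ μ) (x : ℝ) (m n : ℕ) (hm : 1 ≤ m) (hn : 1 ≤ n) :
    ENNReal.log (μ {ω | x ≤ empMean X m ω}) + ENNReal.log (μ {ω | x ≤ empMean X n ω}) ≤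
      ENNReal.log (μ {ω | x ≤ empMean X (m + n) ω}) := by
  have hm' : (0:ℝ) < m := by exact_mod_cast hm
  have hn' : (0:ℝ) < n := by exact_mod_cast hn
  have hmn' : (0:ℝ) < m + n := by positivity
  set Sm : Ω → ℝ := fun ω => ∑ i ∈ Finset.range m, X i ω with hSm_def
  set Tn : Ω → ℝ := fun ω => ∑ i ∈ Finset.Ico m (m + n), X i ω with hTn_def
  have hSm : Measurable Sm := Finset.measurable_sum _ fun i _ => hmeas i
  have hTn : Measurable Tn := Finset.measurable_sum _ fun i _ => hmeas i
  -- independence of the two block sums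
  have hst : IndepFun Sm Tn μ := by
    have h := hindep.indepFun_finset (Finset.range m) (Finset.Ico m (m + n))
      (by simp [Finset.disjoint_left]; omega) hmeas
    have h2 := h.comp (φ := fun v : (↥(Finset.range m) → ℝ) => ∑ i, v i)
      (ψ := fun v : (↥(Finset.Ico m (m + n)) → ℝ) => ∑ i, v i)
      (Finset.measurable_sum _ fun i _ => measurable_pi_apply i)
      (Finset.measurable_sum _ fun i _ => measurable_pi_apply i)
    have e1 : ((fun v : (↥(Finset.range m) → ℝ) => ∑ i, v i) ∘
        fun a (i : ↥(Finset.range m)) => X i a) = Sm := by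
      funext ω
      show ∑ i ∈ (Finset.range m).attach, X (↑i) ω = ∑ i ∈ Finset.range m, X i ω
      exact Finset.sum_attach _ (fun i => X i ω)
    have e2 : ((fun v : (↥(Finset.Ico m (m + n)) → ℝ) => ∑ i, v i) ∘
        fun a (i : ↥(Finset.Ico m (m + n))) => X i a) = Tn := by
      funext ω
      show ∑ i ∈ (Finset.Ico m (m + n)).attach, X i.1 ω
        = ∑ i ∈ Finset.Ico m (m + n), X i ω
      exact Finset.sum_attach _ (fun i => X i ω)
    rwa [e1, e2] at h2
  -- rewrite events as preimages
  have hA : {ω | x ≤ empMean X m ω} = Sm ⁻¹' Set.Ici (x * m) := by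
    ext ω; simp only [Set.mem_setOf_eq, Set.mem_preimage, Set.mem_Ici, empMean,
      le_div_iff₀ hm']
    exact Iff.rfl
  have hB : {ω | x ≤ empMean X n ω}
      = (fun ω => ∑ i ∈ Finset.range n, X i ω) ⁻¹' Set.Ici (x * n) := by
    ext ω; simp only [Set.mem_setOf_eq, Set.mem_preimage, Set.mem_Ici, empMean,
      le_div_iff₀ hn']
  -- the second block has the same distribution as the first n variables
  have hTid : IdentDistrib Tn (fun ω => ∑ i ∈ Finset.range n, X i ω) μ μ := by
    have e : Tn = fun ω => ∑ i ∈ Finset.range n, X (m + i) ω := by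
      funext ω
      show ∑ i ∈ Finset.Ico m (m + n), X i ω = _
      rw [Finset.sum_Ico_eq_sum_range]
      simp
    rw [e]
    exact aux_sum_shift X hmeas hindep hident m n
  have hμB : μ (Tn ⁻¹' Set.Ici (x * n)) = μ {ω | x ≤ empMean X n ω} := by
    rw [hB]
    exact hTid.measure_mem_eq measurableSet_Ici
  -- inclusion of the intersection in the target event
  have hincl : Sm ⁻¹' Set.Ici (x * m) ∩ Tn ⁻¹' Set.Ici (x * n)
      ⊆ {ω | x ≤ empMean X (m + n) ω} := by
    rintro ω ⟨h1, h2⟩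
    simp only [Set.mem_preimage, Set.mem_Ici] at h1 h2
    simp only [Set.mem_setOf_eq, empMean]
    rw [le_div_iff₀ (by positivity : (0:ℝ) < ((m + n : ℕ) : ℝ))]
    have hsum : ∑ i ∈ Finset.range (m + n), X i ω = Sm ω + Tn ω := by
      show _ = (∑ i ∈ Finset.range m, X i ω) + ∑ i ∈ Finset.Ico m (m + n), X i ω
      rw [Finset.range_eq_Ico, Finset.range_eq_Ico]
      exact (Finset.sum_Ico_consecutive (fun i => X i ω) (Nat.zero_le m)
        (Nat.le_add_right m n)).symm
    rw [hsum]
    push_cast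
    calc x * (↑m + ↑n) = x * m + x * n := by ring
      _ ≤ Sm ω + Tn ω := add_le_add h1 h2
  -- put everything together
  have key : μ {ω | x ≤ empMean X m ω} * μ {ω | x ≤ empMean X n ω}
      ≤ μ {ω | x ≤ empMean X (m + n) ω} := by
    rw [hA, ← hμB,
      ← hst.measure_inter_preimage_eq_mul _ _ measurableSet_Ici measurableSet_Ici]
    exact measure_mono hincl
  calc ENNReal.log (μ {ω | x ≤ empMean X m ω}) + ENNReal.log (μ {ω | x ≤ empMean X n ω})
      = ENNReal.log (μ {ω | x ≤ empMean X m ω} * μ {ω | x ≤ empMean X n ω}) :=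
        ENNReal.log_mul_add.symm
    _ ≤ _ := ENNReal.log_monotone key
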